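/- arXiv:1606.03617 — 5 statements merged into one kernel-verified Lean document; each statement's English description precedes it below -/
import Mathlib

section
/- Let R be an integral domain of characteristic zero and R[t] the polynomial ring in one variable t over R. A pair (X, Y) of polynomials in R[t] satisfies the Pell equation X² − (t² − 1)·Y² = 1 if and only if there exist a natural number n and signs ε, δ ∈ {1, −1} such that X = ε·T_n and Y = δ·U_{n−1}, where T_n and U_{n−1} denote the images in R[t] of the Chebyshev polynomials of the first and second kind (with the convention U_{−1} = 0, so the pairs (±1, 0) are included). -/
open Polynomial Polynomial.Chebyshev

section lemmas
variable (R : Type*) [CommRing R]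

private lemma U_pell_invariant (n : ℤ) :
    U R n ^ 2 + U R (n - 1) ^ 2 - 2 * X * U R n * U R (n - 1) = 1 := by
  induction n using Polynomial.Chebyshev.induct with
  | zero => simp
  | one => simp; ring
  | add_two n ih1 ih2 =>
    have e1 : ((n : ℤ) + 2) - 1 = n + 1 := by ring
    have e2 : ((n : ℤ) + 1) - 1 = n := by ring
    rw [e1]
    rw [e2] at ih1
    have h := U_add_two R (n : ℤ)
    linear_combination ih1 + (U R ((n : ℤ) + 2) - U R (n : ℤ)) * h
  | neg_add_one n ih1 ih2 =>
    have e1 : (-(n : ℤ) - 1) - 1 = -n - 2 := by ring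
    have e2 : (-(n : ℤ)) - 1 = -n - 1 := by ring
    rw [e1, e2]
    rw [e2] at ih1
    have h := U_add_two R (-(n : ℤ) - 2)
    have e3 : (-(n : ℤ) - 2) + 2 = -n := by ring
    have e4 : (-(n : ℤ) - 2) + 1 = -n - 1 := by ring
    rw [e3, e4] at h
    linear_combination ih1 + (U R (-(n : ℤ) - 2) - U R (-(n : ℤ))) * h

private lemma pell_T_U (n : ℤ) :
    T R n ^ 2 - (X ^ 2 - 1) * U R (n - 1) ^ 2 = 1 := by
  linear_combination U_pell_invariant R n +
    (T R n + U R n - X * U R (n - 1)) * T_eq_U_sub_X_mul_U R n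

private lemma T_succ_eq (n : ℤ) :
    T R (n + 1) = X * T R n + (X ^ 2 - 1) * U R (n - 1) := by
  have h := one_sub_X_sq_mul_U_eq_pol_in_T R (n - 1)
  have e1 : (n : ℤ) - 1 + 1 = n := by ring
  have e2 : (n : ℤ) - 1 + 2 = n + 1 := by ring
  rw [e1, e2] at h
  linear_combination h

private lemma U_succ_eq (n : ℤ) :
    U R n = X * U R (n - 1) + T R n := by
  have h := U_eq_X_mul_U_add_T R (n - 1)
  have e1 : (n : ℤ) - 1 + 1 = n := by ring
  rw [e1] at h
  exact h

end lemmas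

private lemma sq_eq_sq_domain {S : Type*} [CommRing S] [IsDomain S] {a b : S}
    (h : a ^ 2 = b ^ 2) : a = b ∨ a = -b := by
  have : (a - b) * (a + b) = 0 := by linear_combination h
  rcases mul_eq_zero.mp this with h' | h'
  · exact Or.inl (sub_eq_zero.mp h')
  · exact Or.inr (eq_neg_of_add_eq_zero_left h')

private lemma pell_descent {R : Type*} [CommRing R] [IsDomain R] [CharZero R]
    (P Q : Polynomial R) (hQ : Q ≠ 0) (hQ2 : Q ^ 2 ≠ 1)
    (h : P ^ 2 - (X ^ 2 - 1) * Q ^ 2 = 1) :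
    (X * Q - P).natDegree < Q.natDegree ∨ (X * Q + P).natDegree < Q.natDegree := by
  set d := Q.natDegree with hd
  have hprod : (X * Q - P) * (X * Q + P) = Q ^ 2 - 1 := by linear_combination -h
  have hne : Q ^ 2 - 1 ≠ 0 := sub_ne_zero.mpr hQ2
  have hA : X * Q - P ≠ 0 := by
    intro h0; rw [h0, zero_mul] at hprod; exact hne hprod.symm
  have hB : X * Q + P ≠ 0 := by
    intro h0; rw [h0, mul_zero] at hprod; exact hne hprod.symm
  have hdeg : (X * Q - P).natDegree + (X * Q + P).natDegree = (Q ^ 2 - 1).natDegree := by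
    rw [← natDegree_mul hA hB, hprod]
  have hle : (Q ^ 2 - 1).natDegree ≤ 2 * d := by
    refine le_trans (natDegree_sub_le _ _) ?_
    simp [natDegree_pow, hd, two_mul]
  by_contra hcon
  push_neg at hcon
  obtain ⟨h1, h2⟩ := hcon
  have hsum : (X * Q - P) + (X * Q + P) = 2 * X * Q := by ring
  have h2X : (2 * X : Polynomial R) ≠ 0 := by
    intro h0
    have := congrArg (fun p => Polynomial.coeff p 1) h0
    simp at this
  have hdXQ : (2 * X * Q).natDegree = 1 + d := by
    rw [natDegree_mul h2X hQ]
    congr 1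
    have h2C : (2 : Polynomial R) = C 2 := by
      rw [show ((2:R)) = ((2:ℕ):R) by norm_num, Polynomial.C_eq_natCast]; norm_num
    rw [h2C, natDegree_C_mul (by norm_num : (2 : R) ≠ 0), natDegree_X]
  have hsumle : ((X * Q - P) + (X * Q + P)).natDegree ≤ d := by
    refine le_trans (natDegree_add_le _ _) ?_
    omega
  rw [hsum, hdXQ] at hsumle
  omega

private lemma pell_aux {R : Type*} [CommRing R] [IsDomain R] [CharZero R] (d : ℕ) :
    ∀ P Q : Polynomial R, Q.natDegree ≤ d → P ^ 2 - (X ^ 2 - 1) * Q ^ 2 = 1 →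
    ∃ (n : ℤ) (ε : R), (ε = 1 ∨ ε = -1) ∧ P = C ε * T R n ∧ Q = C ε * U R (n - 1) := by
  induction d using Nat.strong_induction_on with
  | _ d ih =>
  intro P Q hdeg h
  by_cases hQ : Q = 0
  · subst hQ
    have hP2 : P ^ 2 = 1 ^ 2 := by linear_combination h
    rcases sq_eq_sq_domain hP2 with rfl | rfl
    · exact ⟨0, 1, Or.inl rfl, by simp, by simp⟩
    · exact ⟨0, -1, Or.inr rfl, by simp, by simp⟩
  by_cases hQ2 : Q ^ 2 = 1
  · have hP2 : P ^ 2 = X ^ 2 := by linear_combination h + (X^2-1) * hQ2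
    have hQ1 : Q ^ 2 = 1 ^ 2 := by simpa using hQ2
    rcases sq_eq_sq_domain hP2 with rfl | rfl <;> rcases sq_eq_sq_domain hQ1 with rfl | rfl
    · exact ⟨1, 1, Or.inl rfl, by simp, by norm_num⟩
    · refine ⟨-1, 1, Or.inl rfl, ?_, ?_⟩
      · simp [T_neg_one]
      · norm_num [show (-1 : ℤ) - 1 = -2 by ring, U_neg_two]
    · refine ⟨-1, -1, Or.inr rfl, ?_, ?_⟩
      · simp [T_neg_one]
      · norm_num [show (-1 : ℤ) - 1 = -2 by ring, U_neg_two]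
    · refine ⟨1, -1, Or.inr rfl, ?_, ?_⟩
      · simp
      · norm_num
  -- descent
  have key : ∀ P : Polynomial R, P ^ 2 - (X ^ 2 - 1) * Q ^ 2 = 1 →
      (X * Q - P).natDegree < Q.natDegree →
      ∃ (n : ℤ) (ε : R), (ε = 1 ∨ ε = -1) ∧ P = C ε * T R n ∧ Q = C ε * U R (n - 1) := by
    intro P h hlt
    set P' := X * P - (X ^ 2 - 1) * Q with hP'
    set Q' := X * Q - P with hQ'
    have h' : P' ^ 2 - (X ^ 2 - 1) * Q' ^ 2 = 1 := by
      rw [hP', hQ']; linear_combination h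
    have hQ'le : Q'.natDegree ≤ Q'.natDegree := le_rfl
    have hlt' : Q'.natDegree < d := lt_of_lt_of_le hlt hdeg
    obtain ⟨m, ε, hε, hPm, hQm⟩ := ih Q'.natDegree hlt' P' Q' le_rfl h'
    have hPrec : P = X * P' + (X ^ 2 - 1) * Q' := by rw [hP', hQ']; ring
    have hQrec : Q = P' + X * Q' := by rw [hP', hQ']; ring
    refine ⟨m + 1, ε, hε, ?_, ?_⟩
    · rw [hPrec, hPm, hQm, T_succ_eq R m]; ring
    · rw [hQrec, hPm, hQm, show (m + 1 : ℤ) - 1 = m by ring, U_succ_eq R m]; ring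
  rcases pell_descent P Q hQ hQ2 h with hA | hB
  · exact key P h hA
  · have hB' : (X * Q - (-P)).natDegree < Q.natDegree := by
      rw [sub_neg_eq_add]; exact hB
    obtain ⟨m, ε, hε, hPm, hQm⟩ := key (-P) (by linear_combination h) hB'
    refine ⟨-m, -ε, ?_, ?_, ?_⟩
    · rcases hε with rfl | rfl
      · exact Or.inr rfl
      · exact Or.inl (by norm_num)
    · rw [T_neg, map_neg]
      linear_combination -hPm
    · rw [show (-m : ℤ) - 1 = -m - 1 by ring, U_neg_sub_one, map_neg]
      linear_combination hQm

/-- Let `R` be an integral domain of characteristic zero. A pair `(X, Y)` of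
polynomials in `R[t]` satisfies the Pell equation `X² − (t² − 1)·Y² = 1` if and
only if there exist `n : ℕ` and signs `ε, δ ∈ {1, −1}` with `X = ε·T_n` and
`Y = δ·U_{n−1}`, where `T`, `U` are the Chebyshev polynomials of the first and
second kind (with `U_{−1} = 0`). -/
theorem pell_solutions_polynomial_ring (R : Type*) [CommRing R] [IsDomain R] [CharZero R]
    (X Y : Polynomial R) :
    X ^ 2 - (Polynomial.X ^ 2 - 1) * Y ^ 2 = 1 ↔
      ∃ (n : ℕ) (ε δ : R), (ε = 1 ∨ ε = -1) ∧ (δ = 1 ∨ δ = -1) ∧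
        X = Polynomial.C ε * Polynomial.Chebyshev.T R n ∧
        Y = Polynomial.C δ * Polynomial.Chebyshev.U R ((n : ℤ) - 1) := by
  constructor
  · intro h
    obtain ⟨n, ε, hε, hX, hY⟩ := pell_aux Y.natDegree X Y le_rfl h
    obtain ⟨N, rfl | rfl⟩ := Int.eq_nat_or_neg n
    · exact ⟨N, ε, ε, hε, hε, hX, hY⟩
    · refine ⟨N, ε, -ε, hε, ?_, ?_, ?_⟩
      · rcases hε with rfl | rfl
        · exact Or.inr rfl
        · exact Or.inl (by norm_num)
      · rw [hX, T_neg]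
      · rw [hY, show (-(N:ℤ)) - 1 = -(N:ℤ) - 1 by ring, U_neg_sub_one, map_neg]
        ring
  · rintro ⟨n, ε, δ, hε, hδ, rfl, rfl⟩
    have hε2 : (C ε) ^ 2 = (1 : Polynomial R) := by
      rcases hε with rfl | rfl <;> simp
    have hδ2 : (C δ) ^ 2 = (1 : Polynomial R) := by
      rcases hδ with rfl | rfl <;> simp
    linear_combination (T R (n : ℤ) ^ 2) * hε2 -
      ((Polynomial.X ^ 2 - 1) * U R ((n : ℤ) - 1) ^ 2) * hδ2 + pell_T_U R (n : ℤ)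
end

section
/- Let R be an integral domain of characteristic zero. The set of values { Y(1) : Y ∈ R[t] and there exists X ∈ R[t] with X² − (t² − 1)·Y² = 1 }, where Y(1) denotes evaluation of the polynomial Y at t = 1, is exactly the image of ℤ under the canonical ring homomorphism ℤ → R. (The solutions of the Pell equation are the pairs (±T_n, ±U_{n−1}) and ±U_{n−1}(1) = ±n, while the solution (±1, 0) contributes the value 0.) -/
open Polynomial Polynomial.Chebyshev

section Aux

variable {R : Type*} [CommRing R] [IsDomain R] [CharZero R]

private lemma evalU_nat (n : ℕ) : (U R n).eval 1 = ((n : ℤ) + 1 : ℤ) := by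
  induction n using Nat.twoStepInduction with
  | zero => simp [U_zero]
  | one => simp [U_one]
  | more n ih1 ih2 =>
    push_cast
    rw [U_add_two]
    push_cast at ih1 ih2
    simp only [eval_sub, eval_mul, eval_ofNat, eval_X]
    rw [ih1, ih2]
    push_cast
    ring

private lemma evalU_int (m : ℤ) : (U R m).eval 1 = ((m + 1 : ℤ) : R) := by
  rcases le_or_gt 0 m with h | h
  · obtain ⟨n, rfl⟩ := Int.eq_ofNat_of_zero_le h
    exact evalU_nat n
  · obtain ⟨n, rfl⟩ : ∃ n : ℕ, m = -(n : ℤ) - 1 := ⟨(-m-1).toNat, by omega⟩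
    rw [U_neg_sub_one, eval_neg]
    rcases Nat.eq_zero_or_pos n with rfl | hn
    · simp [U_neg_one]
    · obtain ⟨k, rfl⟩ := Nat.exists_eq_add_of_lt hn
      rw [show ((0 + k + 1 : ℕ) : ℤ) - 1 = (k : ℤ) by push_cast; ring, evalU_nat k]
      push_cast
      ring

private lemma pell_nat (n : ℕ) :
    (T R n) ^ 2 - (X ^ 2 - 1) * (U R ((n:ℤ) - 1)) ^ 2 = 1 := by
  induction n with
  | zero => simp [T_zero, U_neg_one]
  | succ n ih =>
    have h1 := T_eq_X_mul_T_sub_pol_U R ((n:ℤ) - 1)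
    rw [show (n:ℤ)-1+2 = (n:ℤ)+1 by ring, show (n:ℤ)-1+1 = (n:ℤ) by ring] at h1
    have h2 := U_eq_X_mul_U_add_T R ((n:ℤ) - 1)
    rw [show (n:ℤ)-1+1 = (n:ℤ) by ring] at h2
    push_cast
    rw [show ((n:ℤ) + 1 - 1) = (n:ℤ) by ring]
    linear_combination (T R ((n:ℤ)+1) + X * T R n - (1 - X^2) * U R ((n:ℤ)-1)) * h1 +
      (1 - X^2) * (U R (n:ℤ) + X * U R ((n:ℤ)-1) + T R n) * h2 + ih

private lemma pell_int (m : ℤ) :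
    (T R m) ^ 2 - (X ^ 2 - 1) * (U R (m - 1)) ^ 2 = 1 := by
  rcases le_or_gt 0 m with h | h
  · obtain ⟨n, rfl⟩ := Int.eq_ofNat_of_zero_le h
    exact pell_nat n
  · have key := pell_nat (R := R) (-m).toNat
    rw [show (((-m).toNat : ℤ)) = -m by omega] at key
    rw [show m - 1 = -(-m) - 1 by ring, U_neg_sub_one, ← T_neg]
    linear_combination key

private lemma pell_descent_s1 (d : ℕ) : ∀ Y X' : Polynomial R, Y.natDegree < d →
    X' ^ 2 - (X ^ 2 - 1) * Y ^ 2 = 1 → ∃ n : ℤ, Y.eval 1 = (n : R) := by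
  induction d with
  | zero => intro Y X' h; omega
  | succ d ih =>
    intro Y W hdeg heq
    rcases eq_or_ne Y 0 with rfl | hY0
    · exact ⟨0, by simp⟩
    have hW1 : W.eval 1 = 1 ∨ W.eval 1 = -1 := by
      have h := congrArg (eval 1) heq
      simpa using h
    rcases eq_or_ne (Y ^ 2) 1 with hY1 | hY1
    · have h1 : Y.eval 1 = 1 ∨ Y.eval 1 = -1 := by
        have h := congrArg (eval 1) hY1
        simpa using h
      rcases h1 with h | h
      · exact ⟨1, by simpa using h⟩
      · exact ⟨-1, by simpa using h⟩
    · set A := W - X * Y with hA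
      set B := W + X * Y with hB
      have hmul : A * B = 1 - Y ^ 2 := by
        rw [hA, hB]; linear_combination heq
      have hne : (1 : R[X]) - Y ^ 2 ≠ 0 := sub_ne_zero.mpr (Ne.symm hY1)
      have hAne : A ≠ 0 := fun h => hne (by rw [← hmul, h, zero_mul])
      have hBne : B ≠ 0 := fun h => hne (by rw [← hmul, h, mul_zero])
      have hsum : A.natDegree + B.natDegree ≤ 2 * Y.natDegree := by
        rw [← natDegree_mul hAne hBne, hmul]
        refine le_trans (natDegree_sub_le _ _) ?_
        simp [natDegree_pow]
      have h2Y : ((2 : R[X]) * X * Y).natDegree = Y.natDegree + 1 := by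
        rw [natDegree_mul (mul_ne_zero (by norm_num) X_ne_zero) hY0,
          natDegree_mul (by norm_num) X_ne_zero]
        simp
        omega
      have hmax : Y.natDegree + 1 ≤ max A.natDegree B.natDegree := by
        have hBA : (2 : R[X]) * X * Y = B - A := by rw [hA, hB]; ring
        calc Y.natDegree + 1 = ((2 : R[X]) * X * Y).natDegree := h2Y.symm
          _ = (B - A).natDegree := by rw [hBA]
          _ ≤ max B.natDegree A.natDegree := natDegree_sub_le _ _
          _ = max A.natDegree B.natDegree := max_comm _ _
      rcases le_max_iff.mp hmax with hbig | hbig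
      · -- A has big degree ⇒ B has small degree; use Y₁ = B
        have hBd : B.natDegree < d := by omega
        have heqB : (X * W + (X ^ 2 - 1) * Y) ^ 2 - (X ^ 2 - 1) * B ^ 2 = 1 := by
          rw [hB]; linear_combination heq
        obtain ⟨m, hm⟩ := ih B _ hBd heqB
        have hBe : B.eval 1 = W.eval 1 + Y.eval 1 := by rw [hB]; simp
        rcases hW1 with h | h
        · exact ⟨m - 1, by push_cast; rw [← hm, hBe, h]; ring⟩
        · exact ⟨m + 1, by push_cast; rw [← hm, hBe, h]; ring⟩
      · -- B has big degree ⇒ A has small degree; use Y₁ = A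
        have hAd : A.natDegree < d := by omega
        have heqA : (X * W - (X ^ 2 - 1) * Y) ^ 2 - (X ^ 2 - 1) * A ^ 2 = 1 := by
          rw [hA]; linear_combination heq
        obtain ⟨m, hm⟩ := ih A _ hAd heqA
        have hAe : A.eval 1 = W.eval 1 - Y.eval 1 := by rw [hA]; simp
        rcases hW1 with h | h
        · exact ⟨1 - m, by push_cast; rw [← hm, hAe, h]; ring⟩
        · exact ⟨-1 - m, by push_cast; rw [← hm, hAe, h]; ring⟩

end Aux

/-- Let `R` be an integral domain of characteristic zero. The set of values
`Y(1)` of polynomials `Y ∈ R[t]` for which there exists `X ∈ R[t]` with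
`X² − (t² − 1)·Y² = 1` is exactly the image of `ℤ` in `R`. -/
theorem pell_values_at_one_polynomial_ring (R : Type*) [CommRing R] [IsDomain R] [CharZero R] :
    { r : R | ∃ Y X : Polynomial R,
        X ^ 2 - (Polynomial.X ^ 2 - 1) * Y ^ 2 = 1 ∧ Y.eval 1 = r } =
      Set.range (Int.cast : ℤ → R) := by
  ext r
  constructor
  · rintro ⟨Y, W, heq, rfl⟩
    obtain ⟨n, hn⟩ := pell_descent_s1 (Y.natDegree + 1) Y W (Nat.lt_succ_self _) heq
    exact ⟨n, hn.symm⟩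
  · rintro ⟨n, rfl⟩
    refine ⟨U R (n - 1), T R n, pell_int n, ?_⟩
    rw [evalU_int]
    push_cast
    ring
end

section
/- Let K be a field, A a set, a ∈ A, and let ā denote the image of the generator a in the free associative unital algebra 𝔸_K(A) over K on A. For all f, g ∈ 𝔸_K(A): f² + ā·g² = 0 if and only if f = 0 and g = 0. (Consequently a conjunction of two equations in 𝔸_K(A) is equivalent to a single equation.) -/
open MonoidAlgebra Finsupp

/-- Length-degree of an element of the monoid algebra of a free monoid. -/
noncomputable def FreeAux.mdeg {K : Type*} [Field K] {A : Type*}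
    (p : MonoidAlgebra K (FreeMonoid A)) : ℕ :=
  p.coeff.support.sup FreeMonoid.length

namespace FreeAux

variable {K : Type*} [Field K] {A : Type*}

lemma length_le_of_mem_support {p : MonoidAlgebra K (FreeMonoid A)} {w : FreeMonoid A}
    (hw : w ∈ p.coeff.support) : w.length ≤ mdeg p :=
  Finset.le_sup hw

lemma length_le_of_mem_support_mul {p q : MonoidAlgebra K (FreeMonoid A)} {w : FreeMonoid A}
    (hw : w ∈ (p * q).coeff.support) : w.length ≤ mdeg p + mdeg q := by
  classical
  obtain ⟨u, hu, v, hv, rfl⟩ := Finset.mem_mul.mp (MonoidAlgebra.support_coeff_mul_subset p q hw)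
  rw [FreeMonoid.length_mul]
  exact Nat.add_le_add (length_le_of_mem_support hu) (length_le_of_mem_support hv)

lemma mdeg_mul {p q : MonoidAlgebra K (FreeMonoid A)} (hp : p ≠ 0) (hq : q ≠ 0) :
    mdeg (p * q) = mdeg p + mdeg q := by
  classical
  set P : MonoidAlgebra K (FreeMonoid A) :=
    MonoidAlgebra.ofCoeff (p.coeff.filter (fun w => w.length = mdeg p)) with hP
  set P' : MonoidAlgebra K (FreeMonoid A) :=
    MonoidAlgebra.ofCoeff (p.coeff.filter (fun w => ¬ w.length = mdeg p)) with hP'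
  set Q : MonoidAlgebra K (FreeMonoid A) :=
    MonoidAlgebra.ofCoeff (q.coeff.filter (fun w => w.length = mdeg q)) with hQ
  set Q' : MonoidAlgebra K (FreeMonoid A) :=
    MonoidAlgebra.ofCoeff (q.coeff.filter (fun w => ¬ w.length = mdeg q)) with hQ'
  have hpPQ : p = P + P' := congrArg MonoidAlgebra.ofCoeff (Finsupp.filter_pos_add_filter_neg p.coeff _).symm
  have hqPQ : q = Q + Q' := congrArg MonoidAlgebra.ofCoeff (Finsupp.filter_pos_add_filter_neg q.coeff _).symm
  have hPsupp : ∀ w ∈ P.coeff.support, w.length = mdeg p := by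
    intro w hw
    rw [hP, Finsupp.support_filter, Finset.mem_filter] at hw
    exact hw.2
  have hQsupp : ∀ w ∈ Q.coeff.support, w.length = mdeg q := by
    intro w hw
    rw [hQ, Finsupp.support_filter, Finset.mem_filter] at hw
    exact hw.2
  have hP'supp : ∀ w ∈ P'.coeff.support, w.length < mdeg p := by
    intro w hw
    rw [hP', Finsupp.support_filter, Finset.mem_filter] at hw
    exact lt_of_le_of_ne (length_le_of_mem_support hw.1) hw.2
  have hQ'supp : ∀ w ∈ Q'.coeff.support, w.length < mdeg q := by
    intro w hw
    rw [hQ', Finsupp.support_filter, Finset.mem_filter] at hw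
    exact lt_of_le_of_ne (length_le_of_mem_support hw.1) hw.2
  have hPne : P ≠ 0 := by
    obtain ⟨w, hw, hwd⟩ := Finset.exists_mem_eq_sup p.coeff.support
      (Finsupp.support_nonempty_iff.mpr (MonoidAlgebra.coeff_eq_zero.not.mpr hp)) FreeMonoid.length
    intro h0
    have hwd' : w.length = mdeg p := hwd.symm
    have : P.coeff w = p.coeff w := by
      rw [hP, MonoidAlgebra.coeff_ofCoeff, Finsupp.filter_apply, if_pos hwd']
    rw [h0] at this
    exact Finsupp.mem_support_iff.mp hw this.symm
  have hQne : Q ≠ 0 := by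
    obtain ⟨w, hw, hwd⟩ := Finset.exists_mem_eq_sup q.coeff.support
      (Finsupp.support_nonempty_iff.mpr (MonoidAlgebra.coeff_eq_zero.not.mpr hq)) FreeMonoid.length
    intro h0
    have hwd' : w.length = mdeg q := hwd.symm
    have : Q.coeff w = q.coeff w := by
      rw [hQ, MonoidAlgebra.coeff_ofCoeff, Finsupp.filter_apply, if_pos hwd']
    rw [h0] at this
    exact Finsupp.mem_support_iff.mp hw this.symm
  have hPQne : P * Q ≠ 0 := mul_ne_zero hPne hQne
  obtain ⟨w, hw⟩ := Finsupp.support_nonempty_iff.mpr (MonoidAlgebra.coeff_eq_zero.not.mpr hPQne)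
  obtain ⟨u, hu, v, hv, huv⟩ := Finset.mem_mul.mp (MonoidAlgebra.support_coeff_mul_subset P Q hw)
  have hwlen : w.length = mdeg p + mdeg q := by
    rw [← huv, FreeMonoid.length_mul, hPsupp u hu, hQsupp v hv]
  -- the coefficient of `w` in `p * q` equals that in `P * Q`
  have hrest : ∀ r s : MonoidAlgebra K (FreeMonoid A),
      (∀ x ∈ r.coeff.support, ∀ y ∈ s.coeff.support, (x * y).length < mdeg p + mdeg q) →
      (r * s).coeff w = 0 := by
    intro r s h
    by_contra h0
    have hw' : w ∈ (r * s).coeff.support := Finsupp.mem_support_iff.mpr h0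
    obtain ⟨x, hx, y, hy, hxy⟩ := Finset.mem_mul.mp (MonoidAlgebra.support_coeff_mul_subset r s hw')
    have := h x hx y hy
    rw [hxy, hwlen] at this
    exact lt_irrefl _ this
  have hPQ'w : (P * Q').coeff w = 0 := by
    refine hrest _ _ (fun x hx y hy => ?_)
    rw [FreeMonoid.length_mul, hPsupp x hx]
    exact Nat.add_lt_add_left (hQ'supp y hy) _
  have hP'Qw : (P' * Q).coeff w = 0 := by
    refine hrest _ _ (fun x hx y hy => ?_)
    rw [FreeMonoid.length_mul, hQsupp y hy]
    exact Nat.add_lt_add_right (hP'supp x hx) _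
  have hP'Q'w : (P' * Q').coeff w = 0 := by
    refine hrest _ _ (fun x hx y hy => ?_)
    rw [FreeMonoid.length_mul]
    exact Nat.add_lt_add (hP'supp x hx) (hQ'supp y hy)
  have hpqw : (p * q).coeff w ≠ 0 := by
    have : p * q = P * Q + (P * Q' + P' * Q + P' * Q') := by
      rw [hpPQ, hqPQ]; noncomm_ring
    have h4 : (p * q).coeff w = (P * Q).coeff w + ((P * Q').coeff w + (P' * Q).coeff w + (P' * Q').coeff w) := by
      rw [this]; rfl
    rw [h4, hPQ'w, hP'Qw, hP'Q'w, add_zero, add_zero, add_zero]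
    exact Finsupp.mem_support_iff.mp hw
  have hge : mdeg p + mdeg q ≤ mdeg (p * q) := by
    rw [← hwlen]
    exact length_le_of_mem_support (Finsupp.mem_support_iff.mpr hpqw)
  refine le_antisymm ?_ hge
  rcases eq_or_ne (p * q) 0 with h0 | h0
  · rw [h0]; simp [mdeg]
  · exact Finset.sup_le fun w hw => length_le_of_mem_support_mul hw

lemma mdeg_neg (p : MonoidAlgebra K (FreeMonoid A)) : mdeg (-p) = mdeg p := by
  unfold mdeg; rw [MonoidAlgebra.coeff_neg, Finsupp.support_neg]

lemma mdeg_single_of (a : A) :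
    mdeg (MonoidAlgebra.single (FreeMonoid.of a) (1 : K)) = 1 := by
  unfold mdeg
  rw [MonoidAlgebra.coeff_single, Finsupp.support_single_ne_zero _ (one_ne_zero), Finset.sup_singleton]
  rfl

end FreeAux

/-- In the free associative unital algebra `𝔸_K(A)` over a field `K`, for a
generator `a ∈ A` and any `f, g ∈ 𝔸_K(A)` one has `f² + ā·g² = 0` iff
`f = 0` and `g = 0`. -/
theorem freeAlgebra_sq_add_gen_mul_sq_eq_zero (K : Type*) [Field K] (A : Type*) (a : A)
    (f g : FreeAlgebra K A) :
    f ^ 2 + FreeAlgebra.ι K a * g ^ 2 = 0 ↔ f = 0 ∧ g = 0 := by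
  constructor
  · intro h
    set E := FreeAlgebra.equivMonoidAlgebraFreeMonoid (R := K) (X := A) with hE
    have hEi : E (FreeAlgebra.ι K a) = MonoidAlgebra.single (FreeMonoid.of a) (1 : K) := by
      rw [hE]
      simp [FreeAlgebra.equivMonoidAlgebraFreeMonoid, MonoidAlgebra.of_apply]
    have hg : g = 0 := by
      by_contra hg
      have hG : E g ≠ 0 := fun h0 => hg (by
        have := congrArg E.symm h0
        simpa using this)
      have hS : MonoidAlgebra.single (FreeMonoid.of a) (1 : K) ≠ 0 :=
by
        simp [Finsupp.single_eq_zero]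
      have hGG : E g * E g ≠ 0 := mul_ne_zero hG hG
      have hSGG : MonoidAlgebra.single (FreeMonoid.of a) (1 : K) * (E g * E g) ≠ 0 :=
        mul_ne_zero hS hGG
      have hkey : E f * E f = -(MonoidAlgebra.single (FreeMonoid.of a) (1 : K) * (E g * E g)) := by
        have := congrArg E h
        rw [map_add, map_zero, map_mul, map_pow, map_pow, hEi] at this
        rw [pow_two, pow_two] at this
        exact eq_neg_of_add_eq_zero_left this
      have hF : E f ≠ 0 := by
        intro h0
        rw [h0, zero_mul] at hkey
        exact hSGG (neg_eq_zero.mp hkey.symm)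
      have h1 : FreeAux.mdeg (E f * E f) = FreeAux.mdeg (E f) + FreeAux.mdeg (E f) :=
        FreeAux.mdeg_mul hF hF
      have h2 : FreeAux.mdeg (MonoidAlgebra.single (FreeMonoid.of a) (1 : K) * (E g * E g))
          = 1 + (FreeAux.mdeg (E g) + FreeAux.mdeg (E g)) := by
        rw [FreeAux.mdeg_mul hS hGG, FreeAux.mdeg_mul hG hG, FreeAux.mdeg_single_of]
      rw [hkey, FreeAux.mdeg_neg, h2] at h1
      omega
    refine ⟨?_, hg⟩
    rw [hg] at h
    rw [pow_two, pow_two] at h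
    simp only [mul_zero, zero_mul, add_zero] at h
    exact mul_self_eq_zero.mp h
  · rintro ⟨rfl, rfl⟩
    rw [pow_two]
    simp
end

section
/- Let K be a field, G a torsion-free group, and g ∈ G an element such that C_G(g^k) = C_G(g) for every nonzero integer k, where C_G(·) denotes the centralizer in G. Then an element u of the group algebra K(G) commutes with g if and only if every group element in the support of u lies in C_G(g). Consequently the centralizer C_{K(G)}(g) = { u ∈ K(G) : u·g = g·u } equals the K-linear span of C_G(g) and is isomorphic as a K-algebra to the group algebra K(C_G(g)). -/
open MonoidAlgebra Finsupp

/-- A predicate on a monoid saying that only `1` is of finite order (old Mathlib definition). -/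
def Monoid.IsTorsionFree (G : Type*) [Monoid G] : Prop :=
  ∀ g : G, g ≠ 1 → ¬IsOfFinOrder g


/-- Let `K` be a field, `G` a torsion-free group and `g ∈ G` with
`C_G(gᵏ) = C_G(g)` for all nonzero integers `k`. Then `u ∈ K(G)` commutes with
`g` iff the support of `u` lies in `C_G(g)`; consequently the centralizer of
`g` in `K(G)` is the `K`-span of `C_G(g)` and is isomorphic as a `K`-algebra to
the group algebra `K(C_G(g))`. -/
theorem centralizer_in_group_algebra (K G : Type*) [Field K] [Group G]
    (htf : Monoid.IsTorsionFree G) (g : G)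
    (hc : ∀ k : ℤ, k ≠ 0 → Subgroup.centralizer {g ^ k} = Subgroup.centralizer {g}) :
    (∀ u : MonoidAlgebra K G,
        u * MonoidAlgebra.of K G g = MonoidAlgebra.of K G g * u ↔
          ∀ h ∈ u.coeff.support, h ∈ Subgroup.centralizer {g}) ∧
      Subalgebra.toSubmodule
          (Subalgebra.centralizer K ({MonoidAlgebra.of K G g} : Set (MonoidAlgebra K G))) =
        Submodule.span K (MonoidAlgebra.of K G '' (Subgroup.centralizer {g} : Set G)) ∧
      Nonempty
        ((Subalgebra.centralizer K ({MonoidAlgebra.of K G g} : Set (MonoidAlgebra K G))) ≃ₐ[K]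
          MonoidAlgebra K (Subgroup.centralizer {g})) := by
  classical
  have key : ∀ u : MonoidAlgebra K G,
      u * MonoidAlgebra.of K G g = MonoidAlgebra.of K G g * u ↔
        ∀ h ∈ u.coeff.support, h ∈ Subgroup.centralizer ({g} : Set G) := by
    intro u
    have hconj : (u * MonoidAlgebra.of K G g = MonoidAlgebra.of K G g * u) ↔
        ∀ h : G, u.coeff (g * h * g⁻¹) = u.coeff h := by
      constructor
      · intro H h
        have := congrArg (fun v : MonoidAlgebra K G => v.coeff (g * h)) H
        simpa [MonoidAlgebra.of_apply, MonoidAlgebra.mul_single_apply,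
          MonoidAlgebra.single_mul_apply, mul_assoc] using this
      · intro H
        ext y
        have := H (g⁻¹ * y)
        simp only [← mul_assoc, mul_inv_cancel] at this
        simpa [MonoidAlgebra.of_apply, MonoidAlgebra.mul_single_apply,
          MonoidAlgebra.single_mul_apply, mul_assoc] using this
    constructor
    · intro H h hh
      rw [hconj] at H
      have hn : ∀ (n : ℕ) (h : G), u.coeff (g ^ n * h * (g ^ n)⁻¹) = u.coeff h := by
        intro n
        induction n with
        | zero => simp
        | succ n ih =>
          intro h
          have : g ^ (n + 1) * h * (g ^ (n + 1))⁻¹ =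
              g * (g ^ n * h * (g ^ n)⁻¹) * g⁻¹ := by group
          rw [this, H, ih]
      have hmem : ∀ n : ℕ, g ^ n * h * (g ^ n)⁻¹ ∈ u.coeff.support := by
        intro n
        simp only [Finsupp.mem_support_iff, hn]
        simpa using hh
      obtain ⟨m, n, hmn, e⟩ : ∃ m n : ℕ, m ≠ n ∧
          g ^ m * h * (g ^ m)⁻¹ = g ^ n * h * (g ^ n)⁻¹ := by
        obtain ⟨m, n, hmn, e⟩ := Finite.exists_ne_map_eq_of_infinite
          (fun n : ℕ => (⟨g ^ n * h * (g ^ n)⁻¹, hmem n⟩ : u.coeff.support))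
        exact ⟨m, n, hmn, by simpa [Subtype.ext_iff] using e⟩
      set k : ℤ := (m : ℤ) - n with hk
      have hk0 : k ≠ 0 := sub_ne_zero.mpr (by exact_mod_cast hmn)
      have h1 : g ^ k = (g ^ n)⁻¹ * g ^ m := by
        rw [hk]; group
      have e2 : g ^ m * h = g ^ n * h * (g ^ n)⁻¹ * g ^ m := by
        rw [← e]; group
      have e3 : g ^ k * h = h * g ^ k := by
        rw [h1, mul_assoc, e2]; group
      have : h ∈ Subgroup.centralizer ({g ^ k} : Set G) :=
        Subgroup.mem_centralizer_iff.mpr (by rintro x rfl; exact e3)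
      rwa [hc k hk0] at this
    · intro H
      rw [hconj]
      intro h
      by_cases hh : u.coeff h = 0
      · by_cases hh' : u.coeff (g * h * g⁻¹) = 0
        · rw [hh, hh']
        · exfalso
          have := H _ (Finsupp.mem_support_iff.mpr hh')
          have hcomm : g * (g * h * g⁻¹) = (g * h * g⁻¹) * g :=
            Subgroup.mem_centralizer_iff.mp this g rfl
          have : g * h * g⁻¹ = h := by
            have h2 : g * (g * h * g⁻¹) = g * h := by rw [hcomm]; group
            exact mul_left_cancel h2
          rw [this] at hh'
          exact hh' hh
      · have := H _ (Finsupp.mem_support_iff.mpr hh)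
        have hcomm : g * h = h * g := Subgroup.mem_centralizer_iff.mp this g rfl
        have : g * h * g⁻¹ = h := by rw [hcomm]; group
        rw [this]
  have hspan : Subalgebra.toSubmodule
      (Subalgebra.centralizer K ({MonoidAlgebra.of K G g} : Set (MonoidAlgebra K G))) =
      Submodule.span K (MonoidAlgebra.of K G '' (Subgroup.centralizer {g} : Set G)) := by
    apply le_antisymm
    · intro u hu
      have hu' : MonoidAlgebra.of K G g * u = u * MonoidAlgebra.of K G g :=
        (Subalgebra.mem_centralizer_iff (R:=K)).mp ((Subalgebra.mem_toSubmodule _).mp hu) _ rfl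
      have hsupp := (key u).mp hu'.symm
      rw [← MonoidAlgebra.sum_coeff_single u]
      apply Submodule.finsuppSum_mem
      intro a ha
      have h1 : MonoidAlgebra.single a (u.coeff a) = u.coeff a • MonoidAlgebra.of K G a := by
        simp [MonoidAlgebra.of_apply, MonoidAlgebra.smul_single']
      rw [h1]
      exact Submodule.smul_mem _ _ (Submodule.subset_span
        ⟨a, hsupp a (Finsupp.mem_support_iff.mpr ha), rfl⟩)
    · rw [Submodule.span_le]
      rintro _ ⟨h, hh, rfl⟩
      refine (Subalgebra.mem_toSubmodule _).mpr ((Subalgebra.mem_centralizer_iff (R:=K)).mpr ?_)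
      rintro x rfl
      rw [← map_mul, ← map_mul, Subgroup.mem_centralizer_iff.mp hh g rfl]
  refine ⟨key, hspan, ?_⟩
  set C := Subgroup.centralizer ({g} : Set G) with hCdef
  let F : MonoidAlgebra K C →ₐ[K] MonoidAlgebra K G :=
    MonoidAlgebra.mapDomainAlgHom K K C.subtype
  have hF : ∀ v : MonoidAlgebra K C, F v = MonoidAlgebra.mapDomain (C.subtype) v := fun v => rfl
  have hinj : Function.Injective F := fun a b hab =>
    MonoidAlgebra.mapDomain_injective (C.subtype_injective) (by rw [← hF, ← hF]; exact hab)
  have hrange : F.range =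
      Subalgebra.centralizer K ({MonoidAlgebra.of K G g} : Set (MonoidAlgebra K G)) := by
    apply le_antisymm
    · rintro _ ⟨v, rfl⟩
      refine (Subalgebra.mem_centralizer_iff (R:=K)).mpr ?_
      rintro x rfl
      refine ((key (F v)).mpr ?_).symm
      intro h hh
      rw [hF, MonoidAlgebra.coeff_mapDomain] at hh
      obtain ⟨c, _, rfl⟩ := Finset.mem_image.mp (Finsupp.mapDomain_support hh)
      exact c.2
    · intro u hu
      have : u ∈ Subalgebra.toSubmodule F.range := by
        rw [← Subalgebra.mem_toSubmodule, hspan] at hu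
        refine Submodule.span_le.mpr ?_ hu
        rintro _ ⟨h, hh, rfl⟩
        refine ⟨MonoidAlgebra.of K C ⟨h, hh⟩, ?_⟩
        show F ((MonoidAlgebra.of K C) ⟨h, hh⟩) = _
        rw [hF]
        simp [MonoidAlgebra.of_apply, Finsupp.mapDomain_single]
      exact (Subalgebra.mem_toSubmodule _).mp this
  exact ⟨(Subalgebra.equivOfEq _ _ hrange.symm).trans (AlgEquiv.ofInjective F hinj).symm⟩
end

section
/- Let G = A ∗ B be the free product of two nontrivial groups A and B which are not both of order 2. Then there exists an element g ∈ G of infinite order whose centralizer in G is the infinite cyclic subgroup generated by g, i.e. C_G(g) = ⟨g⟩ ≅ ℤ, and moreover C_G(g^k) = C_G(g) for every nonzero integer k. (In the paper's terminology, G contains an element whose centralizer is of Laurent type.) -/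
open Monoid CoprodI CoprodI.Word List

set_option linter.unusedSectionVars false

namespace LaurentAux

variable {G : Bool → Type*} [∀ i, Group (G i)] [∀ i, DecidableEq (G i)]
variable (a : G true) (b : G false)

/-- The alternating list `[a, b, a, b, …]` of length `2k`. -/
def Q : ℕ → List (Σ i, G i)
  | 0 => []
  | k + 1 => ⟨true, a⟩ :: ⟨false, b⟩ :: Q k

lemma mem_Q {k : ℕ} {l : Σ i, G i} (hl : l ∈ Q a b k) :
    l = ⟨true, a⟩ ∨ l = ⟨false, b⟩ := by
  induction k with
  | zero => simp [Q] at hl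
  | succ k ih =>
    simp only [Q, List.mem_cons] at hl
    rcases hl with rfl | rfl | hl
    · exact Or.inl rfl
    · exact Or.inr rfl
    · exact ih hl

lemma Q_length (k : ℕ) : (Q a b k).length = 2 * k := by
  induction k with
  | zero => rfl
  | succ k ih => simp [Q, ih]; ring

lemma Q_append (j k : ℕ) : Q a b (j + k) = Q a b j ++ Q a b k := by
  induction j with
  | zero => simp [Q]
  | succ j ih => simp [Q, Nat.succ_add, ih]

lemma Q_head {k : ℕ} (hk : k ≠ 0) : (Q a b k).head? = some ⟨true, a⟩ := by
  cases k with
  | zero => exact absurd rfl hk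
  | succ k => rfl

lemma Q_getLast {k : ℕ} (hk : k ≠ 0) : (Q a b k).getLast? = some ⟨false, b⟩ := by
  obtain ⟨k, rfl⟩ := Nat.exists_eq_succ_of_ne_zero hk
  rw [Nat.succ_eq_add_one, Q_append, List.getLast?_append_of_ne_nil]
  · rfl
  · simp [Q]

lemma Q_ne_one {k : ℕ} (ha : a ≠ 1) (hb : b ≠ 1) : ∀ l ∈ Q a b k, Sigma.snd l ≠ 1 := by
  intro l hl
  rcases mem_Q a b hl with rfl | rfl
  · exact ha
  · exact hb

lemma Q_chain : ∀ k : ℕ, (Q a b k).Chain' fun l l' => Sigma.fst l ≠ Sigma.fst l'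
  | 0 => List.isChain_nil
  | (k + 1) => by
    rw [Q, List.Chain', List.isChain_cons_cons, List.isChain_cons]
    refine ⟨by simp, fun h hh => ?_, Q_chain k⟩
    cases k with
    | zero => simp [Q] at hh
    | succ k =>
      rw [Q_head a b k.succ_ne_zero, Option.mem_some_iff] at hh
      subst hh
      simp

variable (ha : a ≠ 1) (hb : b ≠ 1)

/-- The reduced word `(ab)^k`. -/
def WQ (k : ℕ) : Word G := ⟨Q a b k, Q_ne_one a b ha hb, Q_chain a b k⟩

lemma prod_toList (w : Word G) : w.prod = List.prod (w.toList.map fun l => of l.snd) := rfl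

lemma prod_WQ (k : ℕ) : (WQ a b ha hb k).prod = (of a * of b) ^ k := by
  induction k with
  | zero => rfl
  | succ k ih =>
    have : (WQ a b ha hb (k+1)).prod = of a * (of b * (WQ a b ha hb k).prod) := by
      simp [prod_toList, WQ, Q, mul_assoc]
    rw [this, ih, pow_succ']
    simp [mul_assoc]

end LaurentAux

namespace LaurentAux

variable {G : Bool → Type*} [∀ i, Group (G i)] [∀ i, DecidableEq (G i)]

/-- Concatenation of reduced words, given compatibility of the junction. -/
def wmul (w₁ w₂ : Word G)
    (h : ∀ l₁ ∈ w₁.toList.getLast?, ∀ l₂ ∈ w₂.toList.head?, Sigma.fst l₁ ≠ Sigma.fst l₂) :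
    Word G where
  toList := w₁.toList ++ w₂.toList
  ne_one := by
    intro l hl
    rcases List.mem_append.1 hl with h' | h'
    · exact w₁.ne_one l h'
    · exact w₂.ne_one l h'
  chain_ne := List.isChain_append.2 ⟨w₁.chain_ne, w₂.chain_ne, h⟩

lemma prod_wmul (w₁ w₂ : Word G) (h) : (wmul w₁ w₂ h).prod = w₁.prod * w₂.prod := by
  simp [prod_toList, wmul]

/-- The inverse of a reduced word. -/
def winv (w : Word G) : Word G where
  toList := (w.toList.map fun l => ⟨l.fst, l.snd⁻¹⟩).reverse
  ne_one := by
    intro l hl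
    rw [List.mem_reverse, List.mem_map] at hl
    obtain ⟨l', hl', rfl⟩ := hl
    simpa using w.ne_one l' hl'
  chain_ne := by
    rw [List.isChain_reverse, List.isChain_map]
    exact w.chain_ne.imp fun _ _ h => Ne.symm h

lemma winv_toList (w : Word G) :
    (winv w).toList = (w.toList.map fun l => ⟨l.fst, l.snd⁻¹⟩).reverse := rfl

lemma prod_winv (w : Word G) : (winv w).prod = w.prod⁻¹ := by
  rw [prod_toList, prod_toList, winv_toList]
  induction w.toList with
  | nil => simp
  | cons l t ih =>
    simp only [List.map_cons, List.reverse_cons, List.map_append, List.prod_append,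
      List.prod_cons, mul_inv_rev, List.map_nil, List.prod_nil, mul_one] at *
    simp only [List.map_reverse, List.map_map] at ih ⊢
    simp [ih]

lemma equiv_prod (w : Word G) : Word.equiv w.prod = w :=
  Word.equiv.apply_symm_apply w

lemma prod_equiv (x : CoprodI G) : (Word.equiv x).prod = x :=
  Word.equiv.symm_apply_apply x

lemma prod_injective {w₁ w₂ : Word G} (h : w₁.prod = w₂.prod) : w₁ = w₂ := by
  rw [← equiv_prod w₁, ← equiv_prod w₂, h]

lemma equiv_inv (x : CoprodI G) : Word.equiv x⁻¹ = winv (Word.equiv x) := by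
  rw [← equiv_prod (winv (Word.equiv x)), prod_winv, prod_equiv]

lemma equiv_mul (x y : CoprodI G) : Word.equiv (x * y) = x • Word.equiv y := by
  conv_lhs => rw [← prod_equiv y, ← prod_smul, equiv_prod]

/-- Length of the normal form. -/
def len (x : CoprodI G) : ℕ := (Word.equiv x).toList.length

lemma len_inv (x : CoprodI G) : len x⁻¹ = len x := by
  simp [len, equiv_inv, winv_toList]

lemma len_prod (w : Word G) : len w.prod = w.toList.length := by
  rw [len, equiv_prod]

end LaurentAux

namespace LaurentAux

variable {G : Bool → Type*} [∀ i, Group (G i)] [∀ i, DecidableEq (G i)]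

lemma rcons_length {i : Bool} (p : Pair G i) :
    (rcons p).toList.length ≤ p.tail.toList.length + 1 := by
  rw [rcons]
  split
  · exact Nat.le_succ _
  · simp [Word.cons]

lemma tail_length_le {i : Bool} (p : Pair G i) :
    p.tail.toList.length ≤ (rcons p).toList.length := by
  rw [rcons]
  split
  · exact le_rfl
  · simp [Word.cons]

lemma rcons_equivPair (i : Bool) (w : Word G) : rcons (equivPair i w) = w := by
  rw [← equivPair_symm]
  exact (equivPair i).symm_apply_apply w

lemma equivPair_tail_length (i : Bool) (w : Word G) :
    (equivPair i w).tail.toList.length ≤ w.toList.length := by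
  conv_rhs => rw [← rcons_equivPair i w]
  exact tail_length_le _

lemma len_of_smul_le (i : Bool) (c : G i) (w : Word G) :
    (of c • w).toList.length ≤ w.toList.length + 1 := by
  rw [of_smul_def]
  exact le_trans (rcons_length _) (by simp [equivPair_tail_length i w])

lemma equivPair_tail_length_eq {i : Bool} {w : Word G} (h : fstIdx w = some i) :
    w.toList.length = (equivPair i w).tail.toList.length + 1 := by
  have hne : (equivPair i w).head ≠ 1 := by
    intro h1
    have hr := rcons_equivPair i w
    rw [rcons, dif_pos h1] at hr
    exact (equivPair i w).fstIdx_ne (by rw [hr]; exact h)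
  conv_lhs => rw [← rcons_equivPair i w]
  rw [rcons, dif_neg hne]
  simp [Word.cons]

lemma len_of_smul_le' {i : Bool} (c : G i) {w : Word G} (h : fstIdx w = some i) :
    (of c • w).toList.length ≤ w.toList.length := by
  rw [of_smul_def, equivPair_tail_length_eq h]
  exact rcons_length _

lemma len_of_mul (i : Bool) (c : G i) (x : CoprodI G) : len (of c * x) ≤ len x + 1 := by
  rw [len, equiv_mul]
  exact len_of_smul_le i c _

lemma len_of_mul' {i : Bool} (c : G i) {x : CoprodI G}
    (h : fstIdx (Word.equiv x) = some i) : len (of c * x) ≤ len x := by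
  rw [len, equiv_mul]
  exact len_of_smul_le' c h

lemma len_mul_of (i : Bool) (c : G i) (x : CoprodI G) : len (x * of c) ≤ len x + 1 := by
  rw [← len_inv, mul_inv_rev, ← map_inv, ← len_inv x]
  exact len_of_mul i c⁻¹ x⁻¹

lemma fstIdx_winv (w : Word G) :
    fstIdx (winv w) = (w.toList.getLast?).map Sigma.fst := by
  rw [fstIdx, winv_toList, List.head?_reverse, List.getLast?_map]
  cases w.toList.getLast? <;> rfl

lemma len_mul_of' {i : Bool} (c : G i) {x : CoprodI G}
    (h : ((Word.equiv x).toList.getLast?).map Sigma.fst = some i) :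
    len (x * of c) ≤ len x := by
  rw [← len_inv, mul_inv_rev, ← map_inv, ← len_inv x]
  refine len_of_mul' c⁻¹ ?_
  rw [equiv_inv, fstIdx_winv, h]

lemma len_mul_prod_le (w : Word G) (x : CoprodI G) :
    len (x * w.prod) ≤ len x + w.toList.length := by
  induction w using consRecOn generalizing x with
  | empty => simpa using le_rfl
  | cons i m w h1 h2 ih =>
    rw [Word.prod_cons, ← mul_assoc]
    refine le_trans (ih (x * of m)) ?_
    have := len_mul_of i m x
    simp only [Word.cons, List.length_cons]
    omega

lemma len_prod_mul_le (w : Word G) (x : CoprodI G) :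
    len (w.prod * x) ≤ w.toList.length + len x := by
  induction w using consRecOn generalizing x with
  | empty => simpa using le_rfl
  | cons i m w h1 h2 ih =>
    rw [Word.prod_cons, mul_assoc]
    refine le_trans (len_of_mul i m _) ?_
    have := ih x
    simp only [Word.cons, List.length_cons]
    omega

end LaurentAux

namespace LaurentAux

variable {G : Bool → Type*} [∀ i, Group (G i)] [∀ i, DecidableEq (G i)]
variable (a : G true) (b : G false)

lemma comm_Q (k : ℕ) (hk : k ≠ 0) :
    ∀ (n : ℕ) (ℓ : List (Σ i, G i)), ℓ.length ≤ n →
      Q a b k ++ ℓ = ℓ ++ Q a b k → ∃ m, ℓ = Q a b m := by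
  intro n
  induction n with
  | zero =>
    intro ℓ hlen _
    have hnil : ℓ = [] := List.eq_nil_of_length_eq_zero (Nat.le_zero.1 hlen)
    exact ⟨0, by rw [hnil]; rfl⟩
  | succ n ih =>
    intro ℓ hlen heq
    obtain ⟨k', rfl⟩ := Nat.exists_eq_succ_of_ne_zero hk
    match ℓ, hlen with
    | [], _ => exact ⟨0, rfl⟩
    | [c], _ =>
      exfalso
      rw [show Q a b (k' + 1) = ⟨true, a⟩ :: ⟨false, b⟩ :: Q a b k' from rfl] at heq
      simp only [List.cons_append, List.append_nil, List.nil_append, List.singleton_append] at heq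
      injection heq with h1 h2
      injection h2 with h3 _
      exact absurd (congrArg Sigma.fst h3) (by simp)
    | c :: d :: ℓ', hlenc =>
      rw [show Q a b (k' + 1) = ⟨true, a⟩ :: ⟨false, b⟩ :: Q a b k' from rfl] at heq
      simp only [List.cons_append] at heq
      injection heq with h1 h2
      injection h2 with h3 h4
      subst h1
      subst h3
      have h5 : Q a b (k' + 1) ++ ℓ' = ℓ' ++ Q a b (k' + 1) := by
        have he : Q a b k' ++ (⟨true, a⟩ :: ⟨false, b⟩ :: ℓ') = (Q a b k' ++ Q a b 1) ++ ℓ' := by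
          simp [Q]
        rw [he, ← Q_append] at h4
        exact h4
      have hlen' : ℓ'.length ≤ n := by
        simp only [List.length_cons] at hlenc
        omega
      obtain ⟨m, rfl⟩ := ih ℓ' hlen' h5
      exact ⟨m + 1, rfl⟩

variable (ha : a ≠ 1) (hb : b ≠ 1)

include ha hb

lemma WQ_toList (k : ℕ) : (WQ a b ha hb k).toList = Q a b k := rfl

lemma head_true_case (k : ℕ) (hk : k ≠ 0) (h : CoprodI G)
    (hc : h * (of a * of b) ^ k = (of a * of b) ^ k * h)
    (hhead : fstIdx (Word.equiv h) = some true) :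
    ∃ m : ℕ, h = (of a * of b) ^ m := by
  have hprod : (Word.equiv h).prod = h := prod_equiv h
  have hne : (Word.equiv h).toList ≠ [] := by
    intro hnil
    rw [fstIdx, hnil] at hhead
    simp at hhead
  obtain ⟨l, hl⟩ : ∃ l, (Word.equiv h).toList.getLast? = some l := by
    cases hgl : (Word.equiv h).toList.getLast? with
    | none => exact absurd (List.getLast?_eq_none_iff.1 hgl) hne
    | some l => exact ⟨l, rfl⟩
  have hyp₁ : ∀ l₁ ∈ (WQ a b ha hb k).toList.getLast?, ∀ l₂ ∈ (Word.equiv h).toList.head?,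
      Sigma.fst l₁ ≠ Sigma.fst l₂ := by
    intro l₁ hl₁ l₂ hl₂
    rw [Option.mem_def] at hl₁ hl₂
    rw [WQ_toList, Q_getLast a b hk] at hl₁
    have h1 : l₁ = ⟨false, b⟩ := (Option.some_inj.1 hl₁).symm
    have h2 : l₂.fst = true := by
      have hh := hhead
      rw [fstIdx, hl₂] at hh
      simpa using hh
    rw [h1, h2]
    simp
  have e1 : (wmul (WQ a b ha hb k) (Word.equiv h) hyp₁).prod = (of a * of b) ^ k * h := by
    rw [prod_wmul, prod_WQ, hprod]
  cases hfst : l.fst with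
  | false =>
    have hyp₂ : ∀ l₁ ∈ (Word.equiv h).toList.getLast?, ∀ l₂ ∈ (WQ a b ha hb k).toList.head?,
        Sigma.fst l₁ ≠ Sigma.fst l₂ := by
      intro l₁ hl₁ l₂ hl₂
      rw [Option.mem_def] at hl₁ hl₂
      rw [hl] at hl₁
      rw [WQ_toList, Q_head a b hk] at hl₂
      have h1 : l₁ = l := Option.some_inj.1 hl₁.symm
      have h2 : l₂ = ⟨true, a⟩ := Option.some_inj.1 hl₂.symm
      rw [h1, h2, hfst]
      simp
    have e2 : (wmul (Word.equiv h) (WQ a b ha hb k) hyp₂).prod = h * (of a * of b) ^ k := by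
      rw [prod_wmul, prod_WQ, hprod]
    have e3 : wmul (WQ a b ha hb k) (Word.equiv h) hyp₁
        = wmul (Word.equiv h) (WQ a b ha hb k) hyp₂ :=
      prod_injective (by rw [e1, e2, hc])
    have e4 : Q a b k ++ (Word.equiv h).toList = (Word.equiv h).toList ++ Q a b k :=
      congrArg Word.toList e3
    obtain ⟨m, hm⟩ := comm_Q a b k hk (Word.equiv h).toList.length (Word.equiv h).toList le_rfl e4
    refine ⟨m, ?_⟩
    rw [← hprod, prod_WQ a b ha hb m |>.symm, prod_toList, prod_toList, hm]
    rfl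
  | true =>
    exfalso
    have hlen1 : len ((of a * of b) ^ k * h) = 2 * k + (Word.equiv h).toList.length := by
      rw [← e1, len_prod]
      simp [wmul, Q_length, WQ_toList]
    obtain ⟨k', rfl⟩ := Nat.exists_eq_succ_of_ne_zero hk
    have hyp₃ : ∀ l₁ ∈ ([⟨false, b⟩] : List (Σ i, G i)).getLast?,
        ∀ l₂ ∈ (WQ a b ha hb k').toList.head?, Sigma.fst l₁ ≠ Sigma.fst l₂ := by
      intro l₁ hl₁ l₂ hl₂
      rw [Option.mem_def] at hl₁ hl₂
      have h1 : l₁ = ⟨false, b⟩ := by simpa using hl₁.symm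
      rcases Nat.eq_zero_or_pos k' with rfl | hk'
      · exfalso
        simp [WQ_toList, Q] at hl₂
      · rw [WQ_toList, Q_head a b (Nat.pos_iff_ne_zero.1 hk')] at hl₂
        have h2 : l₂ = ⟨true, a⟩ := Option.some_inj.1 hl₂.symm
        rw [h1, h2]
        simp
    set R : Word G := wmul ⟨[⟨false, b⟩], by simpa using hb, List.isChain_singleton _⟩
      (WQ a b ha hb k') hyp₃ with hR
    have hRprod : R.prod = of b * (of a * of b) ^ k' := by
      rw [hR, prod_wmul, prod_WQ]
      congr 1
    have hRlen : R.toList.length = 2 * k' + 1 := by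
      simp [hR, wmul, Q_length, WQ_toList]
    have hsplit : (of a * of b) ^ (k' + 1) = of a * R.prod := by
      rw [hRprod, pow_succ', mul_assoc]
    have hlast : ((Word.equiv h).toList.getLast?).map Sigma.fst = some true := by
      rw [hl, Option.map_some, hfst]
    have hlen2 : len (h * (of a * of b) ^ (k' + 1)) ≤ (Word.equiv h).toList.length + 2 * k' + 1 := by
      rw [hsplit, ← mul_assoc]
      refine le_trans (len_mul_prod_le R (h * of a)) ?_
      have hma := len_mul_of' a hlast
      have hlh : len h = (Word.equiv h).toList.length := rfl
      have hlh2 : len (h * of a) = (Word.equiv (h * of a)).toList.length := rfl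
      omega
    rw [hc, hlen1] at hlen2
    omega

lemma ff_case_contra (k : ℕ) (hk : k ≠ 0) (h : CoprodI G)
    (hc : h * (of a * of b) ^ k = (of a * of b) ^ k * h)
    (hhead : fstIdx (Word.equiv h) = some false)
    (hlast : ((Word.equiv h).toList.getLast?).map Sigma.fst = some false) : False := by
  have hprod : (Word.equiv h).prod = h := prod_equiv h
  have hyp₂ : ∀ l₁ ∈ (Word.equiv h).toList.getLast?, ∀ l₂ ∈ (WQ a b ha hb k).toList.head?,
      Sigma.fst l₁ ≠ Sigma.fst l₂ := by
    intro l₁ hl₁ l₂ hl₂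
    rw [Option.mem_def] at hl₁ hl₂
    rw [WQ_toList, Q_head a b hk] at hl₂
    have h2 : l₂ = ⟨true, a⟩ := Option.some_inj.1 hl₂.symm
    have h1 : l₁.fst = false := by
      rw [hl₁, Option.map_some] at hlast
      simpa using hlast
    rw [h1, h2]
    simp
  have hlen1 : len (h * (of a * of b) ^ k) = (Word.equiv h).toList.length + 2 * k := by
    have e2 : (wmul (Word.equiv h) (WQ a b ha hb k) hyp₂).prod = h * (of a * of b) ^ k := by
      rw [prod_wmul, prod_WQ, hprod]
    rw [← e2, len_prod]
    simp [wmul, Q_length, WQ_toList]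
  obtain ⟨k', rfl⟩ := Nat.exists_eq_succ_of_ne_zero hk
  have hsplit : (of a * of b) ^ (k' + 1) * h
      = (WQ a b ha hb k').prod * (of a * (of b * h)) := by
    rw [prod_WQ, pow_succ, mul_assoc, mul_assoc]
  have hlen2 : len ((of a * of b) ^ (k' + 1) * h) ≤ 2 * k' + (len h + 1) := by
    rw [hsplit]
    refine le_trans (len_prod_mul_le _ _) ?_
    have h1 : len (of b * h) ≤ len h := len_of_mul' b hhead
    have h2 : len (of a * (of b * h)) ≤ len (of b * h) + 1 := len_of_mul true a _
    have h3 : (WQ a b ha hb k').toList.length = 2 * k' := Q_length a b k'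
    omega
  rw [← hc, hlen1] at hlen2
  have hlh : (Word.equiv h).toList.length = len h := rfl
  omega

lemma centralizer_zpow_le (k : ℕ) (hk : k ≠ 0) (h : CoprodI G)
    (hc : h * (of a * of b) ^ k = (of a * of b) ^ k * h) :
    h ∈ Subgroup.zpowers (of a * of b) := by
  cases hℓ : (Word.equiv h).toList.head? with
  | none =>
    have hnil : (Word.equiv h).toList = [] := List.head?_eq_none_iff.1 hℓ
    have : h = 1 := by
      rw [← prod_equiv h, prod_toList, hnil]
      rfl
    rw [this]
    exact Subgroup.one_mem _
  | some l =>
    cases hfst : l.fst with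
    | true =>
      obtain ⟨m, hm⟩ := head_true_case a b ha hb k hk h hc
        (by rw [fstIdx, hℓ, Option.map_some, hfst])
      exact Subgroup.mem_zpowers_iff.2 ⟨(m : ℤ), by rw [zpow_natCast, hm]⟩
    | false =>
      -- pass to the inverse
      have hcinv : h⁻¹ * (of a * of b) ^ k = (of a * of b) ^ k * h⁻¹ :=
        (Commute.inv_left hc).eq
      have hheadinv : fstIdx (Word.equiv h⁻¹) = ((Word.equiv h).toList.getLast?).map Sigma.fst := by
        rw [equiv_inv, fstIdx_winv]
      have hne : (Word.equiv h).toList ≠ [] := by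
        intro hnil
        rw [hnil] at hℓ
        simp at hℓ
      obtain ⟨l', hl'⟩ : ∃ l', (Word.equiv h).toList.getLast? = some l' := by
        cases hgl : (Word.equiv h).toList.getLast? with
        | none => exact absurd (List.getLast?_eq_none_iff.1 hgl) hne
        | some l' => exact ⟨l', rfl⟩
      cases hfst' : l'.fst with
      | true =>
        obtain ⟨m, hm⟩ := head_true_case a b ha hb k hk h⁻¹ hcinv
          (by rw [hheadinv, hl', Option.map_some, hfst'])
        refine Subgroup.mem_zpowers_iff.2 ⟨-(m : ℤ), ?_⟩
        rw [zpow_neg, zpow_natCast, ← hm, inv_inv]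
      | false =>
        exact absurd (ff_case_contra a b ha hb k hk h hc
            (by rw [fstIdx, hℓ, Option.map_some, hfst])
            (by rw [hl', Option.map_some, hfst'])) not_false

lemma g_pow_ne_one (k : ℕ) (hk : k ≠ 0) : (of a * of b) ^ k ≠ 1 := by
  intro hone
  have : (WQ a b ha hb k) = Word.empty := prod_injective (by
    rw [prod_WQ, hone]
    rfl)
  have hlen := congrArg (fun w : Word G => w.toList.length) this
  simp [WQ_toList, Q_length, Word.empty] at hlen
  omega

end LaurentAux

namespace LaurentAux

universe u v

variable (A : Type u) (B : Type v) [Group A] [Group B]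

/-- The `Bool`-indexed family `⟨ULift A, ULift B⟩`. -/
abbrev Fam : Bool → Type (max u v) := fun i => cond i (ULift.{v} A) (ULift.{u} B)

instance : ∀ i, Group (Fam A B i)
  | true => inferInstanceAs (Group (ULift A))
  | false => inferInstanceAs (Group (ULift B))

/-- The canonical map from the binary coproduct to the indexed coproduct. -/
def toI : Monoid.Coprod A B →* CoprodI (Fam A B) :=
  Coprod.lift ((CoprodI.of (i := true)).comp (MulEquiv.ulift.symm.toMonoidHom))
              ((CoprodI.of (i := false)).comp (MulEquiv.ulift.symm.toMonoidHom))

/-- The canonical map from the indexed coproduct to the binary coproduct. -/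
def fromI : CoprodI (Fam A B) →* Monoid.Coprod A B :=
  CoprodI.lift fun i => match i with
    | true => Coprod.inl.comp (MulEquiv.ulift.toMonoidHom)
    | false => Coprod.inr.comp (MulEquiv.ulift.toMonoidHom)

/-- `A ∗ B` is isomorphic to the indexed coproduct over `Bool`. -/
def iso : Monoid.Coprod A B ≃* CoprodI (Fam A B) :=
  MonoidHom.toMulEquiv (toI A B) (fromI A B)
    (by
      apply Coprod.hom_ext
      · ext x
        show fromI A B (toI A B (Coprod.inl x)) = Coprod.inl x
        rw [toI, Coprod.lift_apply_inl, MonoidHom.comp_apply, fromI, CoprodI.lift_of]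
        rfl
      · ext x
        show fromI A B (toI A B (Coprod.inr x)) = Coprod.inr x
        rw [toI, Coprod.lift_apply_inr, MonoidHom.comp_apply, fromI, CoprodI.lift_of]
        rfl)
    (by
      apply CoprodI.ext_hom
      intro i
      cases i
      · ext x
        show toI A B (fromI A B (CoprodI.of x)) = CoprodI.of x
        rw [fromI, CoprodI.lift_of]
        rfl
      · ext x
        show toI A B (fromI A B (CoprodI.of x)) = CoprodI.of x
        rw [fromI, CoprodI.lift_of]
        rfl)

end LaurentAux

open LaurentAux in
/-- Let `G = A ∗ B` be the free product of two nontrivial groups which are not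
both of order 2. Then there is an element `g` of infinite order whose
centralizer is the infinite cyclic subgroup `⟨g⟩ ≅ ℤ`, and moreover
`C_G(gᵏ) = C_G(g)` for every nonzero integer `k`. -/
theorem free_product_has_laurent_type_centralizer (A B : Type*) [Group A] [Group B]
    [Nontrivial A] [Nontrivial B] (h2 : ¬(Nat.card A = 2 ∧ Nat.card B = 2)) :
    ∃ g : Monoid.Coprod A B,
      ¬IsOfFinOrder g ∧
      Subgroup.centralizer {g} = Subgroup.zpowers g ∧
      Nonempty (Subgroup.zpowers g ≃* Multiplicative ℤ) ∧
      ∀ k : ℤ, k ≠ 0 → Subgroup.centralizer {g ^ k} = Subgroup.centralizer {g} := by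
  classical
  obtain ⟨a0, ha0⟩ := exists_ne (1 : A)
  obtain ⟨b0, hb0⟩ := exists_ne (1 : B)
  letI : ∀ i, DecidableEq (Fam A B i) := fun i => Classical.decEq _
  set e := iso A B with he
  set a : Fam A B true := ULift.up a0 with hadef
  set b : Fam A B false := ULift.up b0 with hbdef
  have ha : a ≠ 1 := fun hx => ha0 (congrArg ULift.down hx)
  have hb : b ≠ 1 := fun hx => hb0 (congrArg ULift.down hx)
  set gI : Monoid.CoprodI (Fam A B) := Monoid.CoprodI.of a * Monoid.CoprodI.of b with hgI
  set g : Monoid.Coprod A B := e.symm gI with hg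
  have heg : e g = gI := e.apply_symm_apply gI
  -- main centralizer bound
  have main : ∀ k : ℕ, k ≠ 0 → ∀ h : Monoid.CoprodI (Fam A B),
      h * gI ^ k = gI ^ k * h → h ∈ Subgroup.zpowers gI :=
    fun k hk h hc => centralizer_zpow_le a b ha hb k hk h hc
  -- infinite order
  have hfinI : ¬IsOfFinOrder gI := by
    intro hf
    obtain ⟨n, hn, hone⟩ := isOfFinOrder_iff_pow_eq_one.1 hf
    exact g_pow_ne_one a b ha hb n (Nat.pos_iff_ne_zero.1 hn) hone
  have hfin : ¬IsOfFinOrder g := by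
    intro hf
    exact hfinI (heg ▸ e.toMonoidHom.isOfFinOrder hf)
  -- transfer of `zpowers`
  have hzpow : ∀ x : Monoid.Coprod A B, e x ∈ Subgroup.zpowers gI → x ∈ Subgroup.zpowers g := by
    intro x hx
    obtain ⟨m, hm⟩ := Subgroup.mem_zpowers_iff.1 hx
    refine Subgroup.mem_zpowers_iff.2 ⟨m, ?_⟩
    have := congrArg e.symm hm
    rwa [map_zpow, e.symm_apply_apply, ← hg] at this
  have hcent : Subgroup.centralizer {g} = Subgroup.zpowers g := by
    ext x
    rw [Subgroup.mem_centralizer_iff]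
    constructor
    · intro hx
      have hgx : g * x = x * g := hx g rfl
      have hI : e x * gI ^ 1 = gI ^ 1 * e x := by
        rw [pow_one, ← heg, ← map_mul, ← map_mul, hgx]
      exact hzpow x (main 1 one_ne_zero (e x) hI)
    · intro hx y hy
      rw [Set.mem_singleton_iff] at hy
      subst hy
      obtain ⟨m, hm⟩ := Subgroup.mem_zpowers_iff.1 hx
      rw [← hm]
      exact ((Commute.refl g).zpow_right m).eq
  refine ⟨g, hfin, hcent, ?_, ?_⟩
  · -- zpowers g ≃* Multiplicative ℤ
    have h1 : Function.Injective fun n : ℤ => g ^ n :=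
      injective_zpow_iff_not_isOfFinOrder.2 hfin
    have hinj : Function.Injective (zpowersHom (Monoid.Coprod A B) g) := by
      intro m n hmn
      have : g ^ m.toAdd = g ^ n.toAdd := hmn
      exact Multiplicative.toAdd.injective (h1 this)
    exact ⟨(MonoidHom.ofInjective hinj).symm⟩
  · intro k hk
    ext x
    rw [Subgroup.mem_centralizer_iff, Subgroup.mem_centralizer_iff]
    constructor
    · intro hx
      have hgx : g ^ k * x = x * g ^ k := hx (g ^ k) rfl
      -- transfer to gI
      have hIx : gI ^ k * e x = e x * gI ^ k := by
        have := congrArg e hgx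
        rwa [map_mul, map_mul, map_zpow, heg] at this
      have hc0 : Commute (e x) (gI ^ k) := hIx.symm
      have hdisj : gI ^ ((k.natAbs : ℕ) : ℤ) = gI ^ k ∨
          gI ^ ((k.natAbs : ℕ) : ℤ) = (gI ^ k)⁻¹ := by
        rcases Int.natAbs_eq k with hke | hke
        · left
          conv_rhs => rw [hke]
        · right
          rw [← zpow_neg]
          conv_rhs => rw [hke, neg_neg]
      have hnat : e x * gI ^ (k.natAbs) = gI ^ (k.natAbs) * e x := by
        rcases hdisj with hd | hd
        · rw [← zpow_natCast gI k.natAbs, hd]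
          exact hc0.eq
        · rw [← zpow_natCast gI k.natAbs, hd]
          exact hc0.inv_right.eq
      have hxzp : x ∈ Subgroup.zpowers g :=
        hzpow x (main k.natAbs (Int.natAbs_ne_zero.2 hk) (e x) hnat)
      intro y hy
      rw [Set.mem_singleton_iff] at hy
      subst hy
      obtain ⟨m, hm⟩ := Subgroup.mem_zpowers_iff.1 hxzp
      rw [← hm]
      exact ((Commute.refl g).zpow_right m).eq
    · intro hx y hy
      rw [Set.mem_singleton_iff] at hy
      subst hy
      have hgx : Commute x g := (hx g rfl).symm
      exact (hgx.zpow_right k).symm.eq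
end
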